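/- Identification of the boundary principal-stratum outcome probabilities (Step 2 identities): Under Assumptions 5, 7, and 8, for every g ∈ Fin m: (i) if μ(S¹=0, G=g) > 0 and μ(S⁰=0, S¹=0) > 0, then P(Y¹=1 | S⁰=0, S¹=0) = P(Y=1 | S=0, A=1, G=g); (ii) if μ(S⁰=1, G=g) > 0 and μ(S⁰=1, S¹=1) > 0, then P(Y⁰=1 | S⁰=1, S¹=1) = P(Y=1 | S=1, A=0, G=g). -/

import Mathlib

open MeasureTheory ProbabilityTheory

/-- Conditional probability `P(E | F) = μ(E ∩ F) / μ(F)` as a real number. -/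
noncomputable def condP {Ω : Type*} [MeasurableSpace Ω] (μ : Measure Ω) (E F : Set Ω) : ℝ :=
  (μ (E ∩ F)).toReal / (μ F).toReal

private lemma split_bool {Ω : Type*} [MeasurableSpace Ω] (μ : Measure Ω) [IsProbabilityMeasure μ]
    (E : Set Ω) (B : Ω → Bool) (hE : MeasurableSet E) (hB : Measurable B) :
    (μ E).toReal = (μ (E ∩ {ω | B ω = false})).toReal + (μ (E ∩ {ω | B ω = true})).toReal := by
  have hdisj : Disjoint (E ∩ {ω | B ω = false}) (E ∩ {ω | B ω = true}) := by
    refine Set.disjoint_left.mpr ?_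
    rintro ω ⟨-, h1⟩ ⟨-, h2⟩
    simp only [Set.mem_setOf_eq] at h1 h2
    rw [h1] at h2; cases h2
  have hu := measure_union (μ := μ) hdisj (hE.inter (hB (measurableSet_singleton true)))
  have hE' : E = (E ∩ {ω | B ω = false}) ∪ (E ∩ {ω | B ω = true}) := by
    ext ω; cases h : B ω <;> simp [h]
  rw [← ENNReal.toReal_add (measure_ne_top _ _) (measure_ne_top _ _), ← hu, ← hE']

private lemma pw_i {A S0 S1 Y0 Y1 S Y : Bool} (p : Prop)
    (hS : S = bif A then S1 else S0) (hY : Y = bif A then Y1 else Y0)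
    (hmono : S0 = true → S1 = true) :
    (Y = true ∧ (S = false ∧ A = true ∧ p)) ↔
      ((A = true ∧ S0 = false ∧ S1 = false ∧ Y1 = true) ∧ p) := by
  cases A <;> cases S0 <;> cases S1 <;> simp_all

private lemma pw_id {A S0 S1 Y0 Y1 S Y : Bool} (p : Prop)
    (hS : S = bif A then S1 else S0) (hY : Y = bif A then Y1 else Y0)
    (hmono : S0 = true → S1 = true) :
    (S = false ∧ A = true ∧ p) ↔ ((A = true ∧ S0 = false ∧ S1 = false) ∧ p) := by
  cases A <;> cases S0 <;> cases S1 <;> simp_all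

private lemma pw_ii {A S0 S1 Y0 Y1 S Y : Bool} (p : Prop)
    (hS : S = bif A then S1 else S0) (hY : Y = bif A then Y1 else Y0)
    (hmono : S0 = true → S1 = true) :
    (Y = true ∧ (S = true ∧ A = false ∧ p)) ↔
      ((A = false ∧ S0 = true ∧ S1 = true ∧ Y0 = true) ∧ p) := by
  cases A <;> cases S0 <;> cases S1 <;> simp_all

private lemma pw_iid {A S0 S1 Y0 Y1 S Y : Bool} (p : Prop)
    (hS : S = bif A then S1 else S0) (hY : Y = bif A then Y1 else Y0)
    (hmono : S0 = true → S1 = true) :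
    (S = true ∧ A = false ∧ p) ↔ ((A = false ∧ S0 = true ∧ S1 = true) ∧ p) := by
  cases A <;> cases S0 <;> cases S1 <;> simp_all

private lemma pw_q1 {S0 S1 : Bool} (p : Prop) (hmono : S0 = true → S1 = true) :
    (S1 = false ∧ p) ↔ ((S0 = false ∧ S1 = false) ∧ p) := by
  cases S0 <;> cases S1 <;> simp_all

private lemma pw_q2 {S0 S1 : Bool} (p : Prop) (hmono : S0 = true → S1 = true) :
    (S0 = true ∧ p) ↔ ((S0 = true ∧ S1 = true) ∧ p) := by
  cases S0 <;> cases S1 <;> simp_all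

/-- **Identification of the boundary principal-stratum outcome probabilities (Step 2).**
Under Assumptions 5, 7 and 8, for every `g`:
(i) if `μ(S¹=0, G=g) > 0` and `μ(S⁰=0, S¹=0) > 0` then
`P(Y¹=1 | S⁰=0, S¹=0) = P(Y=1 | S=0, A=1, G=g)`;
(ii) if `μ(S⁰=1, G=g) > 0` and `μ(S⁰=1, S¹=1) > 0` then
`P(Y⁰=1 | S⁰=1, S¹=1) = P(Y=1 | S=1, A=0, G=g)`. -/
theorem stmt15
    {Ω : Type*} [MeasurableSpace Ω] (μ : Measure Ω) [IsProbabilityMeasure μ]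
    {m : ℕ} (hm : 1 ≤ m)
    (G : Ω → Fin m) (A S0 S1 Y0 Y1 S Y : Ω → Bool)
    (hGmeas : Measurable G) (hAmeas : Measurable A)
    (hS0meas : Measurable S0) (hS1meas : Measurable S1)
    (hY0meas : Measurable Y0) (hY1meas : Measurable Y1)
    (hSdef : ∀ ω, S ω = bif A ω then S1 ω else S0 ω)
    (hYdef : ∀ ω, Y ω = bif A ω then Y1 ω else Y0 ω)
    -- Assumption 5
    (hA5pos : ∀ g : Fin m, 0 < μ {ω | G ω = g})
    (hA5ov : ∀ g : Fin m, 0 < condP μ {ω | A ω = true} {ω | G ω = g} ∧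
        condP μ {ω | A ω = true} {ω | G ω = g} < 1)
    (hA5ind : ∀ (g : Fin m) (a s0 s1 y0 y1 : Bool),
      condP μ {ω | A ω = a ∧ S0 ω = s0 ∧ S1 ω = s1 ∧ Y0 ω = y0 ∧ Y1 ω = y1} {ω | G ω = g} =
        condP μ {ω | A ω = a} {ω | G ω = g} *
          condP μ {ω | S0 ω = s0 ∧ S1 ω = s1 ∧ Y0 ω = y0 ∧ Y1 ω = y1} {ω | G ω = g})
    -- Assumption 7
    (hA7 : ∀ (s0 s1 : Bool) (g : Fin m), 0 < μ {ω | S0 ω = s0 ∧ S1 ω = s1 ∧ G ω = g} →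
      condP μ {ω | Y1 ω = true} {ω | S0 ω = s0 ∧ S1 ω = s1 ∧ G ω = g} =
        condP μ {ω | Y1 ω = true} {ω | S0 ω = s0 ∧ S1 ω = s1} ∧
      condP μ {ω | Y0 ω = true} {ω | S0 ω = s0 ∧ S1 ω = s1 ∧ G ω = g} =
        condP μ {ω | Y0 ω = true} {ω | S0 ω = s0 ∧ S1 ω = s1})
    -- Assumption 8 (monotonicity)
    (hA8 : μ {ω | S0 ω ≤ S1 ω} = 1) :
    ∀ g : Fin m,
      (0 < μ {ω | S1 ω = false ∧ G ω = g} → 0 < μ {ω | S0 ω = false ∧ S1 ω = false} →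
        condP μ {ω | Y1 ω = true} {ω | S0 ω = false ∧ S1 ω = false} =
          condP μ {ω | Y ω = true} {ω | S ω = false ∧ A ω = true ∧ G ω = g}) ∧
      (0 < μ {ω | S0 ω = true ∧ G ω = g} → 0 < μ {ω | S0 ω = true ∧ S1 ω = true} →
        condP μ {ω | Y0 ω = true} {ω | S0 ω = true ∧ S1 ω = true} =
          condP μ {ω | Y ω = true} {ω | S ω = true ∧ A ω = false ∧ G ω = g}) := by
  intro g
  -- basic measurable sets
  have mA : ∀ b : Bool, MeasurableSet {ω | A ω = b} := fun b => hAmeas (measurableSet_singleton b)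
  have mS0 : ∀ b : Bool, MeasurableSet {ω | S0 ω = b} := fun b => hS0meas (measurableSet_singleton b)
  have mS1 : ∀ b : Bool, MeasurableSet {ω | S1 ω = b} := fun b => hS1meas (measurableSet_singleton b)
  have mY0 : ∀ b : Bool, MeasurableSet {ω | Y0 ω = b} := fun b => hY0meas (measurableSet_singleton b)
  have mY1 : ∀ b : Bool, MeasurableSet {ω | Y1 ω = b} := fun b => hY1meas (measurableSet_singleton b)
  have mG : MeasurableSet {ω | G ω = g} := hGmeas (measurableSet_singleton g)
  have htpos : (0:ℝ) < (μ {ω | G ω = g}).toReal :=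
    ENNReal.toReal_pos (hA5pos g).ne' (measure_ne_top _ _)
  have ht : (μ {ω | G ω = g}).toReal ≠ 0 := htpos.ne'
  -- monotonicity a.e.
  have hae : ∀ᵐ ω ∂μ, (S0 ω = true → S1 ω = true) := by
    rw [ae_iff]
    have mE : MeasurableSet {ω | ¬(S0 ω = true → S1 ω = true)} := by
      have he : {ω | ¬(S0 ω = true → S1 ω = true)} = {ω | S0 ω = true} ∩ {ω | S1 ω = false} := by
        ext ω; cases h0 : S0 ω <;> cases h1 : S1 ω <;> simp [h0, h1]
      rw [he]; exact (mS0 true).inter (mS1 false)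
    have hss : {ω | S0 ω ≤ S1 ω} = {ω | ¬(S0 ω = true → S1 ω = true)}ᶜ := by
      ext ω; cases h0 : S0 ω <;> cases h1 : S1 ω <;> simp [h0, h1]
    have hc := measure_compl mE (measure_ne_top μ _)
    rw [← hss, hA8, measure_univ] at hc
    have hle1 : μ {ω | ¬(S0 ω = true → S1 ω = true)} ≤ 1 := prob_le_one
    have h2 := ENNReal.sub_sub_cancel ENNReal.one_ne_top hle1
    rw [← hc] at h2
    simpa using h2.symm
  have hcong : ∀ E F : Set Ω,
      (∀ ω, (S0 ω = true → S1 ω = true) → (ω ∈ E ↔ ω ∈ F)) → μ E = μ F := fun E F h =>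
    measure_congr (Filter.eventuallyEq_set.mpr (hae.mono h))
  -- independence at the level of measures
  have hkey : ∀ a s0 s1 y0 y1 : Bool,
      (μ ({ω | A ω = a ∧ S0 ω = s0 ∧ S1 ω = s1 ∧ Y0 ω = y0 ∧ Y1 ω = y1} ∩ {ω | G ω = g})).toReal
          * (μ {ω | G ω = g}).toReal
        = (μ ({ω | A ω = a} ∩ {ω | G ω = g})).toReal *
          (μ ({ω | S0 ω = s0 ∧ S1 ω = s1 ∧ Y0 ω = y0 ∧ Y1 ω = y1} ∩ {ω | G ω = g})).toReal := by
    intro a s0 s1 y0 y1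
    have h := hA5ind g a s0 s1 y0 y1
    simp only [condP] at h
    field_simp at h
    exact h
  -- sum out Y0
  have hkeyY1 : ∀ a s0 s1 y1 : Bool,
      (μ ({ω | A ω = a ∧ S0 ω = s0 ∧ S1 ω = s1 ∧ Y1 ω = y1} ∩ {ω | G ω = g})).toReal
          * (μ {ω | G ω = g}).toReal
        = (μ ({ω | A ω = a} ∩ {ω | G ω = g})).toReal *
          (μ ({ω | S0 ω = s0 ∧ S1 ω = s1 ∧ Y1 ω = y1} ∩ {ω | G ω = g})).toReal := by
    intro a s0 s1 y1
    have e : ∀ b : Bool,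
        ({ω | A ω = a ∧ S0 ω = s0 ∧ S1 ω = s1 ∧ Y1 ω = y1} ∩ {ω | G ω = g}) ∩ {ω | Y0 ω = b}
          = {ω | A ω = a ∧ S0 ω = s0 ∧ S1 ω = s1 ∧ Y0 ω = b ∧ Y1 ω = y1} ∩ {ω | G ω = g} := by
      intro b; ext ω; simp only [Set.mem_inter_iff, Set.mem_setOf_eq]; tauto
    have f : ∀ b : Bool,
        ({ω | S0 ω = s0 ∧ S1 ω = s1 ∧ Y1 ω = y1} ∩ {ω | G ω = g}) ∩ {ω | Y0 ω = b}
          = {ω | S0 ω = s0 ∧ S1 ω = s1 ∧ Y0 ω = b ∧ Y1 ω = y1} ∩ {ω | G ω = g} := by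
      intro b; ext ω; simp only [Set.mem_inter_iff, Set.mem_setOf_eq]; tauto
    rw [split_bool μ ({ω | A ω = a ∧ S0 ω = s0 ∧ S1 ω = s1 ∧ Y1 ω = y1} ∩ {ω | G ω = g}) Y0
          (by exact ((mA a).inter ((mS0 s0).inter ((mS1 s1).inter (mY1 y1)))).inter mG) hY0meas,
        e false, e true,
        split_bool μ ({ω | S0 ω = s0 ∧ S1 ω = s1 ∧ Y1 ω = y1} ∩ {ω | G ω = g}) Y0
          (by exact ((mS0 s0).inter ((mS1 s1).inter (mY1 y1))).inter mG) hY0meas,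
        f false, f true, add_mul, hkey a s0 s1 false y1, hkey a s0 s1 true y1, mul_add]
  -- sum out Y1
  have hkeyY0 : ∀ a s0 s1 y0 : Bool,
      (μ ({ω | A ω = a ∧ S0 ω = s0 ∧ S1 ω = s1 ∧ Y0 ω = y0} ∩ {ω | G ω = g})).toReal
          * (μ {ω | G ω = g}).toReal
        = (μ ({ω | A ω = a} ∩ {ω | G ω = g})).toReal *
          (μ ({ω | S0 ω = s0 ∧ S1 ω = s1 ∧ Y0 ω = y0} ∩ {ω | G ω = g})).toReal := by
    intro a s0 s1 y0
    have e : ∀ b : Bool,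
        ({ω | A ω = a ∧ S0 ω = s0 ∧ S1 ω = s1 ∧ Y0 ω = y0} ∩ {ω | G ω = g}) ∩ {ω | Y1 ω = b}
          = {ω | A ω = a ∧ S0 ω = s0 ∧ S1 ω = s1 ∧ Y0 ω = y0 ∧ Y1 ω = b} ∩ {ω | G ω = g} := by
      intro b; ext ω; simp only [Set.mem_inter_iff, Set.mem_setOf_eq]; tauto
    have f : ∀ b : Bool,
        ({ω | S0 ω = s0 ∧ S1 ω = s1 ∧ Y0 ω = y0} ∩ {ω | G ω = g}) ∩ {ω | Y1 ω = b}
          = {ω | S0 ω = s0 ∧ S1 ω = s1 ∧ Y0 ω = y0 ∧ Y1 ω = b} ∩ {ω | G ω = g} := by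
      intro b; ext ω; simp only [Set.mem_inter_iff, Set.mem_setOf_eq]; tauto
    rw [split_bool μ ({ω | A ω = a ∧ S0 ω = s0 ∧ S1 ω = s1 ∧ Y0 ω = y0} ∩ {ω | G ω = g}) Y1
          (by exact ((mA a).inter ((mS0 s0).inter ((mS1 s1).inter (mY0 y0)))).inter mG) hY1meas,
        e false, e true,
        split_bool μ ({ω | S0 ω = s0 ∧ S1 ω = s1 ∧ Y0 ω = y0} ∩ {ω | G ω = g}) Y1
          (by exact ((mS0 s0).inter ((mS1 s1).inter (mY0 y0))).inter mG) hY1meas,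
        f false, f true, add_mul, hkey a s0 s1 y0 false, hkey a s0 s1 y0 true, mul_add]
  -- sum out both
  have hkey3 : ∀ a s0 s1 : Bool,
      (μ ({ω | A ω = a ∧ S0 ω = s0 ∧ S1 ω = s1} ∩ {ω | G ω = g})).toReal
          * (μ {ω | G ω = g}).toReal
        = (μ ({ω | A ω = a} ∩ {ω | G ω = g})).toReal *
          (μ ({ω | S0 ω = s0 ∧ S1 ω = s1} ∩ {ω | G ω = g})).toReal := by
    intro a s0 s1
    have e : ∀ b : Bool,
        ({ω | A ω = a ∧ S0 ω = s0 ∧ S1 ω = s1} ∩ {ω | G ω = g}) ∩ {ω | Y1 ω = b}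
          = {ω | A ω = a ∧ S0 ω = s0 ∧ S1 ω = s1 ∧ Y1 ω = b} ∩ {ω | G ω = g} := by
      intro b; ext ω; simp only [Set.mem_inter_iff, Set.mem_setOf_eq]; tauto
    have f : ∀ b : Bool,
        ({ω | S0 ω = s0 ∧ S1 ω = s1} ∩ {ω | G ω = g}) ∩ {ω | Y1 ω = b}
          = {ω | S0 ω = s0 ∧ S1 ω = s1 ∧ Y1 ω = b} ∩ {ω | G ω = g} := by
      intro b; ext ω; simp only [Set.mem_inter_iff, Set.mem_setOf_eq]; tauto
    rw [split_bool μ ({ω | A ω = a ∧ S0 ω = s0 ∧ S1 ω = s1} ∩ {ω | G ω = g}) Y1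
          (by exact ((mA a).inter ((mS0 s0).inter (mS1 s1))).inter mG) hY1meas,
        e false, e true,
        split_bool μ ({ω | S0 ω = s0 ∧ S1 ω = s1} ∩ {ω | G ω = g}) Y1
          (by exact ((mS0 s0).inter (mS1 s1)).inter mG) hY1meas,
        f false, f true, add_mul, hkeyY1 a s0 s1 false, hkeyY1 a s0 s1 true, mul_add]
  -- positivity of P(A=a, G=g)
  have hpT : 0 < (μ ({ω | A ω = true} ∩ {ω | G ω = g})).toReal := by
    have h := (hA5ov g).1
    simp only [condP] at h
    rcases div_pos_iff.mp h with ⟨h1, -⟩ | ⟨-, h2⟩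
    · exact h1
    · linarith
  have hpF : 0 < (μ ({ω | A ω = false} ∩ {ω | G ω = g})).toReal := by
    have h2 := (hA5ov g).2
    simp only [condP] at h2
    rw [div_lt_one htpos] at h2
    have hsp := split_bool μ {ω | G ω = g} A mG hAmeas
    rw [Set.inter_comm {ω | G ω = g} {ω | A ω = false},
        Set.inter_comm {ω | G ω = g} {ω | A ω = true}] at hsp
    linarith
  constructor
  · -- case (i)
    intro hI1 hI2
    have hdqE : μ {ω | S1 ω = false ∧ G ω = g}
        = μ ({ω | S0 ω = false ∧ S1 ω = false} ∩ {ω | G ω = g}) := by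
      refine hcong _ _ fun ω hm' => ?_
      simp only [Set.mem_setOf_eq, Set.mem_inter_iff]
      exact pw_q1 _ hm'
    have hdq : 0 < μ ({ω | S0 ω = false ∧ S1 ω = false} ∩ {ω | G ω = g}) := hdqE ▸ hI1
    have hset7 : {ω | S0 ω = false ∧ S1 ω = false ∧ G ω = g}
        = {ω | S0 ω = false ∧ S1 ω = false} ∩ {ω | G ω = g} := by
      ext ω; simp only [Set.mem_inter_iff, Set.mem_setOf_eq]; tauto
    have hdq7 : 0 < μ {ω | S0 ω = false ∧ S1 ω = false ∧ G ω = g} := by rw [hset7]; exact hdq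
    have h7 := (hA7 false false g hdq7).1
    rw [← h7]
    simp only [condP]
    have hnumL : {ω | Y1 ω = true} ∩ {ω | S0 ω = false ∧ S1 ω = false ∧ G ω = g}
        = {ω | S0 ω = false ∧ S1 ω = false ∧ Y1 ω = true} ∩ {ω | G ω = g} := by
      ext ω; simp only [Set.mem_inter_iff, Set.mem_setOf_eq]; tauto
    have hnumR : μ ({ω | Y ω = true} ∩ {ω | S ω = false ∧ A ω = true ∧ G ω = g})
        = μ ({ω | A ω = true ∧ S0 ω = false ∧ S1 ω = false ∧ Y1 ω = true} ∩ {ω | G ω = g}) := by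
      refine hcong _ _ fun ω hm' => ?_
      simp only [Set.mem_setOf_eq, Set.mem_inter_iff]
      exact pw_i _ (hSdef ω) (hYdef ω) hm'
    have hdenR : μ {ω | S ω = false ∧ A ω = true ∧ G ω = g}
        = μ ({ω | A ω = true ∧ S0 ω = false ∧ S1 ω = false} ∩ {ω | G ω = g}) := by
      refine hcong _ _ fun ω hm' => ?_
      simp only [Set.mem_setOf_eq, Set.mem_inter_iff]
      exact pw_id _ (hSdef ω) (hYdef ω) hm'
    rw [hnumL, hset7, hnumR, hdenR]
    have hn := hkeyY1 true false false true
    have hd := hkey3 true false false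
    have hdqr : 0 < (μ ({ω | S0 ω = false ∧ S1 ω = false} ∩ {ω | G ω = g})).toReal :=
      ENNReal.toReal_pos hdq.ne' (measure_ne_top _ _)
    have hd1 : 0 < (μ ({ω | A ω = true ∧ S0 ω = false ∧ S1 ω = false} ∩ {ω | G ω = g})).toReal := by
      have h0 : 0 < (μ ({ω | A ω = true ∧ S0 ω = false ∧ S1 ω = false} ∩ {ω | G ω = g})).toReal
          * (μ {ω | G ω = g}).toReal := by rw [hd]; exact mul_pos hpT hdqr
      rcases mul_pos_iff.mp h0 with ⟨h1, -⟩ | ⟨-, h2⟩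
      · exact h1
      · linarith
    rw [div_eq_div_iff hdqr.ne' hd1.ne']
    refine mul_right_cancel₀ ht ?_
    linear_combination
      (μ ({ω | S0 ω = false ∧ S1 ω = false ∧ Y1 ω = true} ∩ {ω | G ω = g})).toReal * hd
        - (μ ({ω | S0 ω = false ∧ S1 ω = false} ∩ {ω | G ω = g})).toReal * hn
  · -- case (ii)
    intro hI1 hI2
    have hdqE : μ {ω | S0 ω = true ∧ G ω = g}
        = μ ({ω | S0 ω = true ∧ S1 ω = true} ∩ {ω | G ω = g}) := by
      refine hcong _ _ fun ω hm' => ?_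
      simp only [Set.mem_setOf_eq, Set.mem_inter_iff]
      exact pw_q2 _ hm'
    have hdq : 0 < μ ({ω | S0 ω = true ∧ S1 ω = true} ∩ {ω | G ω = g}) := hdqE ▸ hI1
    have hset7 : {ω | S0 ω = true ∧ S1 ω = true ∧ G ω = g}
        = {ω | S0 ω = true ∧ S1 ω = true} ∩ {ω | G ω = g} := by
      ext ω; simp only [Set.mem_inter_iff, Set.mem_setOf_eq]; tauto
    have hdq7 : 0 < μ {ω | S0 ω = true ∧ S1 ω = true ∧ G ω = g} := by rw [hset7]; exact hdq
    have h7 := (hA7 true true g hdq7).2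
    rw [← h7]
    simp only [condP]
    have hnumL : {ω | Y0 ω = true} ∩ {ω | S0 ω = true ∧ S1 ω = true ∧ G ω = g}
        = {ω | S0 ω = true ∧ S1 ω = true ∧ Y0 ω = true} ∩ {ω | G ω = g} := by
      ext ω; simp only [Set.mem_inter_iff, Set.mem_setOf_eq]; tauto
    have hnumR : μ ({ω | Y ω = true} ∩ {ω | S ω = true ∧ A ω = false ∧ G ω = g})
        = μ ({ω | A ω = false ∧ S0 ω = true ∧ S1 ω = true ∧ Y0 ω = true} ∩ {ω | G ω = g}) := by
      refine hcong _ _ fun ω hm' => ?_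
      simp only [Set.mem_setOf_eq, Set.mem_inter_iff]
      exact pw_ii _ (hSdef ω) (hYdef ω) hm'
    have hdenR : μ {ω | S ω = true ∧ A ω = false ∧ G ω = g}
        = μ ({ω | A ω = false ∧ S0 ω = true ∧ S1 ω = true} ∩ {ω | G ω = g}) := by
      refine hcong _ _ fun ω hm' => ?_
      simp only [Set.mem_setOf_eq, Set.mem_inter_iff]
      exact pw_iid _ (hSdef ω) (hYdef ω) hm'
    rw [hnumL, hset7, hnumR, hdenR]
    have hn := hkeyY0 false true true true
    have hd := hkey3 false true true
    have hdqr : 0 < (μ ({ω | S0 ω = true ∧ S1 ω = true} ∩ {ω | G ω = g})).toReal :=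
      ENNReal.toReal_pos hdq.ne' (measure_ne_top _ _)
    have hd1 : 0 < (μ ({ω | A ω = false ∧ S0 ω = true ∧ S1 ω = true} ∩ {ω | G ω = g})).toReal := by
      have h0 : 0 < (μ ({ω | A ω = false ∧ S0 ω = true ∧ S1 ω = true} ∩ {ω | G ω = g})).toReal
          * (μ {ω | G ω = g}).toReal := by rw [hd]; exact mul_pos hpF hdqr
      rcases mul_pos_iff.mp h0 with ⟨h1, -⟩ | ⟨-, h2⟩
      · exact h1
      · linarith
    rw [div_eq_div_iff hdqr.ne' hd1.ne']
    refine mul_right_cancel₀ ht ?_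
    linear_combination
      (μ ({ω | S0 ω = true ∧ S1 ω = true ∧ Y0 ω = true} ∩ {ω | G ω = g})).toReal * hd
        - (μ ({ω | S0 ω = true ∧ S1 ω = true} ∩ {ω | G ω = g})).toReal * hn
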